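/- Let m ≥ 2 be even, P(x,y) = Re((x+iy)^m) and Q(x,y) = (x²+y²)^k with k ≥ 1. Then the quantity ∇P·HessP·(∇Q)^t = P_{xx}·P_y·Q_y + P_{yy}·P_x·Q_x − P_{xy}·(P_x·Q_y + P_y·Q_x) is ≤ 0 at every point of the plane. -/

import Mathlib

/-- Partial derivative with respect to the first variable. -/
noncomputable def pdx (f : ℝ → ℝ → ℝ) (x y : ℝ) : ℝ := deriv (fun x' => f x' y) x

/-- Partial derivative with respect to the second variable. -/
noncomputable def pdy (f : ℝ → ℝ → ℝ) (x y : ℝ) : ℝ := deriv (fun y' => f x y') y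

private lemma reCLM_deriv {f : ℝ → ℂ} {f' : ℂ} {x : ℝ} (h : HasDerivAt f f' x) :
    HasDerivAt (fun t => (f t).re) f'.re x := by
  exact (Complex.reCLM.hasFDerivAt.comp_hasDerivAt x h)

private lemma aux_x (c : ℂ) (n : ℕ) (x y : ℝ) :
    HasDerivAt (fun x' : ℝ => (c * ((x' : ℂ) + (y : ℂ) * Complex.I) ^ n).re)
      ((c * ((n : ℂ) * ((x : ℂ) + (y : ℂ) * Complex.I) ^ (n - 1))).re) x := by
  have h : HasDerivAt (fun w : ℂ => c * (w + (y : ℂ) * Complex.I) ^ n)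
      (c * ((n : ℂ) * ((x : ℂ) + (y : ℂ) * Complex.I) ^ (n - 1))) ((x : ℝ) : ℂ) := by
    have h1 := (((hasDerivAt_id ((x : ℝ) : ℂ)).add_const ((y : ℂ) * Complex.I)).pow n).const_mul c
    simpa [id_eq, mul_assoc] using h1
  exact reCLM_deriv h.comp_ofReal

private lemma aux_y (c : ℂ) (n : ℕ) (x y : ℝ) :
    HasDerivAt (fun y' : ℝ => (c * ((x : ℂ) + (y' : ℂ) * Complex.I) ^ n).re)
      ((c * ((n : ℂ) * ((x : ℂ) + (y : ℂ) * Complex.I) ^ (n - 1)) * Complex.I).re) y := by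
  have h : HasDerivAt (fun w : ℂ => c * ((x : ℂ) + w * Complex.I) ^ n)
      (c * ((n : ℂ) * ((x : ℂ) + (y : ℂ) * Complex.I) ^ (n - 1)) * Complex.I) ((y : ℝ) : ℂ) := by
    have h1 := ((((hasDerivAt_id ((y : ℝ) : ℂ)).mul_const Complex.I).const_add
      ((x : ℂ))).pow n).const_mul c
    have h2 : c * ((n : ℂ) * ((x : ℂ) + (y : ℂ) * Complex.I) ^ (n - 1)) * Complex.I =
        c * ((n : ℂ) * ((x : ℂ) + (y : ℂ) * Complex.I) ^ (n - 1) * (1 * Complex.I)) := by ring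
    rw [h2]
    simpa [id_eq] using h1
  exact reCLM_deriv h.comp_ofReal

theorem stmt_11 (m k : ℕ) (hm : 2 ≤ m) (hme : Even m) (hk : 1 ≤ k)
    (P Q : ℝ → ℝ → ℝ)
    (hP : ∀ x y : ℝ, P x y = ((x + y * Complex.I) ^ m).re)
    (hQ : ∀ x y : ℝ, Q x y = (x ^ 2 + y ^ 2) ^ k) :
    ∀ x y : ℝ,
      pdx (pdx P) x y * pdy P x y * pdy Q x y +
        pdy (pdy P) x y * pdx P x y * pdx Q x y -
        pdy (pdx P) x y * (pdx P x y * pdy Q x y + pdy P x y * pdx Q x y) ≤ 0 := by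
  have h11 : m - 1 - 1 = m - 2 := by omega
  -- first partials of P
  have hPx : ∀ x y : ℝ, pdx P x y =
      ((m : ℂ) * ((x : ℂ) + (y : ℂ) * Complex.I) ^ (m - 1)).re := by
    intro x y
    unfold pdx
    have hfun : (fun x' : ℝ => P x' y) =
        fun x' : ℝ => ((1 : ℂ) * ((x' : ℂ) + (y : ℂ) * Complex.I) ^ m).re := by
      funext x'; rw [hP]; simp
    rw [hfun, (aux_x 1 m x y).deriv]
    simp
  have hPy : ∀ x y : ℝ, pdy P x y =
      ((m : ℂ) * Complex.I * ((x : ℂ) + (y : ℂ) * Complex.I) ^ (m - 1)).re := by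
    intro x y
    unfold pdy
    have hfun : (fun y' : ℝ => P x y') =
        fun y' : ℝ => ((1 : ℂ) * ((x : ℂ) + (y' : ℂ) * Complex.I) ^ m).re := by
      funext y'; rw [hP]; simp
    rw [hfun, (aux_y 1 m x y).deriv]
    congr 1; ring
  -- first partials of Q
  have hQx : ∀ x y : ℝ, pdx Q x y = (k : ℝ) * (x ^ 2 + y ^ 2) ^ (k - 1) * (2 * x) := by
    intro x y
    unfold pdx
    have hfun : (fun x' : ℝ => Q x' y) = fun x' : ℝ => (x' ^ 2 + y ^ 2) ^ k := by
      funext x'; rw [hQ]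
    rw [hfun, (((hasDerivAt_pow 2 x).add_const (y ^ 2)).fun_pow k).deriv]
    push_cast
    ring
  have hQy : ∀ x y : ℝ, pdy Q x y = (k : ℝ) * (x ^ 2 + y ^ 2) ^ (k - 1) * (2 * y) := by
    intro x y
    unfold pdy
    have hfun : (fun y' : ℝ => Q x y') = fun y' : ℝ => (x ^ 2 + (y' ^ 2 : ℝ)) ^ k := by
      funext y'; rw [hQ]
    rw [hfun]
    have h : HasDerivAt (fun y' : ℝ => (x ^ 2 + y' ^ 2) ^ k)
        ((k : ℝ) * (x ^ 2 + y ^ 2) ^ (k - 1) * (2 * y)) y := by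
      have h1 := ((hasDerivAt_pow 2 y).const_add (x ^ 2)).fun_pow k
      refine h1.congr_deriv ?_
      push_cast
      ring
    exact h.deriv
  intro x y
  -- second partials
  have hPxx : pdx (pdx P) x y =
      ((m : ℂ) * (((m - 1 : ℕ) : ℂ) * ((x : ℂ) + (y : ℂ) * Complex.I) ^ (m - 2))).re := by
    show deriv (fun x' : ℝ => pdx P x' y) x = _
    have hfun : (fun x' : ℝ => pdx P x' y) =
        fun x' : ℝ => ((m : ℂ) * ((x' : ℂ) + (y : ℂ) * Complex.I) ^ (m - 1)).re := by
      funext x'; exact hPx x' y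
    rw [hfun, (aux_x (m : ℂ) (m - 1) x y).deriv, h11]
  have hPxy : pdy (pdx P) x y =
      ((m : ℂ) * (((m - 1 : ℕ) : ℂ) * ((x : ℂ) + (y : ℂ) * Complex.I) ^ (m - 2)) *
        Complex.I).re := by
    show deriv (fun y' : ℝ => pdx P x y') y = _
    have hfun : (fun y' : ℝ => pdx P x y') =
        fun y' : ℝ => ((m : ℂ) * ((x : ℂ) + (y' : ℂ) * Complex.I) ^ (m - 1)).re := by
      funext y'; exact hPx x y'
    rw [hfun, (aux_y (m : ℂ) (m - 1) x y).deriv, h11]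
  have hPyy : pdy (pdy P) x y =
      ((m : ℂ) * Complex.I * (((m - 1 : ℕ) : ℂ) * ((x : ℂ) + (y : ℂ) * Complex.I) ^ (m - 2)) *
        Complex.I).re := by
    show deriv (fun y' : ℝ => pdy P x y') y = _
    have hfun : (fun y' : ℝ => pdy P x y') =
        fun y' : ℝ => (((m : ℂ) * Complex.I) * ((x : ℂ) + (y' : ℂ) * Complex.I) ^ (m - 1)).re := by
      funext y'; exact hPy x y'
    rw [hfun, (aux_y ((m : ℂ) * Complex.I) (m - 1) x y).deriv, h11]
  -- rewrite z^(m-1) = z^(m-2) * z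
  have hz : ((x : ℂ) + (y : ℂ) * Complex.I) ^ (m - 1) =
      ((x : ℂ) + (y : ℂ) * Complex.I) ^ (m - 2) * ((x : ℂ) + (y : ℂ) * Complex.I) := by
    rw [← pow_succ]; congr 1; omega
  rw [hPxx, hPxy, hPyy, hPx, hPy, hQx, hQy, hz]
  set A := (((x : ℂ) + (y : ℂ) * Complex.I) ^ (m - 2)).re with hA
  set B := (((x : ℂ) + (y : ℂ) * Complex.I) ^ (m - 2)).im with hB
  simp only [Complex.mul_re, Complex.mul_im, Complex.add_re, Complex.add_im,
    Complex.I_re, Complex.I_im, Complex.ofReal_re, Complex.ofReal_im,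
    Complex.natCast_re, Complex.natCast_im, ← hA, ← hB]
  have ht : (0 : ℝ) ≤ (k : ℝ) * (x ^ 2 + y ^ 2) ^ (k - 1) * (x ^ 2 + y ^ 2) *
      (A ^ 2 + B ^ 2) * (m : ℝ) ^ 2 * ((m - 1 : ℕ) : ℝ) := by positivity
  nlinarith [ht]
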